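/- arXiv:1505.04284 — 8 statements merged into one kernel-verified Lean document; each statement's English description precedes it below -/
import Mathlib

section
/- For n ≥ 1, ∑_{k=0}^{n-1} 𝔽_k^2 = n·𝔽_n^2 − ∑_{k=0}^{n-1} ((k+1)/F_{k+1})·(2𝔽_k + 1/F_{k+1}). -/
open Finset

noncomputable def harmFib (n : ℕ) : ℝ := ∑ k ∈ Finset.Icc 1 n, (1 : ℝ) / Nat.fib k

lemma harmFib_succ (n : ℕ) : harmFib (n + 1) = harmFib n + 1 / Nat.fib (n + 1) := by
  unfold harmFib
  rw [Finset.sum_Icc_succ_top (by omega)]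

theorem stmt_1 (n : ℕ) (hn : 1 ≤ n) :
    ∑ k ∈ Finset.range n, (harmFib k) ^ 2 =
      n * (harmFib n) ^ 2 -
        ∑ k ∈ Finset.range n,
          ((k + 1 : ℝ) / Nat.fib (k + 1)) * (2 * harmFib k + 1 / Nat.fib (k + 1)) := by
  clear hn
  induction n with
  | zero => simp
  | succ n ih =>
      rw [Finset.sum_range_succ, Finset.sum_range_succ, ih, harmFib_succ]
      push_cast
      have h : (Nat.fib (n + 1) : ℝ) ≠ 0 := by
        exact_mod_cast Nat.cast_ne_zero.mpr (Nat.fib_pos.mpr (by omega)).ne'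
      field_simp
      ring
end

section
/- For n ≥ 1 and nonnegative integer m, ∑_{k=0}^{n-1} C(k,m)·𝔽_k = C(n,m+1)·𝔽_n − ∑_{k=0}^{n-1} C(k+1,m+1)·(1/F_{k+1}). -/
open Finset

theorem stmt_2 (n m : ℕ) (hn : 1 ≤ n) :
    ∑ k ∈ Finset.range n, (Nat.choose k m : ℝ) * harmFib k =
      (Nat.choose n (m + 1) : ℝ) * harmFib n -
        ∑ k ∈ Finset.range n, (Nat.choose (k + 1) (m + 1) : ℝ) * (1 / Nat.fib (k + 1)) := by
  clear hn
  induction n with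
  | zero => simp [harmFib]
  | succ n ih =>
      rw [Finset.sum_range_succ, Finset.sum_range_succ, ih, harmFib_succ,
        Nat.choose_succ_succ n m]
      push_cast
      ring
end

section
/- For n ≥ 1, ∑_{k=0}^{n-1} F_{k-1}·𝔽_k = F_n·𝔽_n − n, where F_{-1} = 1 (so that F_{k+1} = F_k + F_{k-1} for all k ≥ 0). -/
open Finset

theorem stmt_5 (n : ℕ) (hn : 1 ≤ n) :
    ∑ k ∈ Finset.range n, (if k = 0 then (1 : ℝ) else (Nat.fib (k - 1) : ℝ)) * harmFib k =
      (Nat.fib n : ℝ) * harmFib n - n := by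
  induction n with
  | zero => omega
  | succ m ih =>
    rcases Nat.eq_or_lt_of_le hn with h | h
    · simp [← h, harmFib]
    · have hm : 1 ≤ m := by omega
      rw [Finset.sum_range_succ, ih hm]
      have hne : m ≠ 0 := by omega
      rw [if_neg hne]
      have hfib : (Nat.fib (m - 1) : ℝ) + Nat.fib m = Nat.fib (m + 1) := by
        rw [← Nat.cast_add, ← Nat.succ_pred_eq_of_pos (show 0 < m by omega)]
        norm_cast
        exact (Nat.fib_add_two).symm
      have hpos : (0 : ℝ) < Nat.fib (m + 1) := by
        exact_mod_cast Nat.fib_pos.mpr (by omega)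
      rw [harmFib_succ]
      have : (Nat.fib (m + 1) : ℝ) * (harmFib m + 1 / Nat.fib (m + 1)) =
          Nat.fib (m + 1) * harmFib m + 1 := by
        rw [mul_add, mul_one_div, div_self hpos.ne']
      rw [this]
      push_cast
      linear_combination harmFib m * hfib
end

section
/- For n ≥ 1, ∑_{k=0}^{n-1} L_{k-1}·𝔽_k = L_n·𝔽_n − ∑_{k=0}^{n-1} L_{k+1}/F_{k+1}, where L_k are the Lucas numbers with L_{-1} = −1, L_0 = 2, L_1 = 1. -/
open Finset

def lucas : ℕ → ℕ
  | 0 => 2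
  | 1 => 1
  | n + 2 => lucas (n + 1) + lucas n

theorem stmt_6 (n : ℕ) (hn : 1 ≤ n) :
    ∑ k ∈ Finset.range n, (if k = 0 then (-1 : ℝ) else (lucas (k - 1) : ℝ)) * harmFib k =
      (lucas n : ℝ) * harmFib n - ∑ k ∈ Finset.range n, (lucas (k + 1) : ℝ) / Nat.fib (k + 1) := by
  induction n, hn using Nat.le_induction with
  | base =>
    simp [harmFib, lucas]
  | succ n hn ih =>
    rw [Finset.sum_range_succ, Finset.sum_range_succ, ih, harmFib_succ]
    have h1 : n ≠ 0 := by omega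
    rw [if_neg h1]
    have h2 : lucas (n + 1) = lucas n + lucas (n - 1) := by
      cases n with
      | zero => omega
      | succ m => simp [lucas, Nat.add_comm]
    have h3 : (Nat.fib (n + 1) : ℝ) ≠ 0 := by
      exact_mod_cast (Nat.fib_pos.mpr (by omega)).ne'
    rw [h2]
    push_cast
    field_simp
    ring
end

section
/- For n, r ≥ 1, the hyperharmonic Fibonacci number admits the closed-form expression 𝔽_n^{(r)} = ∑_{k=1}^{n} C(n−k+r−1, r−1)·(1/F_k). -/
open Finset

noncomputable def hFib : ℕ → ℕ → ℝ
  | 0, n => 1 / Nat.fib n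
  | r + 1, n => ∑ k ∈ Finset.Icc 1 n, hFib r k

theorem stmt_8 (n r : ℕ) (hn : 1 ≤ n) (hr : 1 ≤ r) :
    hFib r n = ∑ k ∈ Finset.Icc 1 n, (Nat.choose (n - k + r - 1) (r - 1) : ℝ) * (1 / Nat.fib k) := by
  induction r, hr using Nat.le_induction generalizing n hn with
  | base =>
    simp [hFib]
  | succ r hr ih =>
    show (∑ m ∈ Finset.Icc 1 n, hFib r m) = _
    rw [Finset.sum_congr rfl fun m hm => ih m (Finset.mem_Icc.mp hm).1]
    rw [Finset.sum_comm' (t' := Finset.Icc 1 n) (s' := fun k => Finset.Icc k n)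
      (by intro m k; simp only [Finset.mem_Icc]; omega)]
    refine Finset.sum_congr rfl fun k hk => ?_
    rw [← Finset.sum_mul]
    congr 1
    have hk1 : 1 ≤ k := (Finset.mem_Icc.mp hk).1
    have hkn : k ≤ n := (Finset.mem_Icc.mp hk).2
    push_cast [← Nat.cast_sum]
    congr 1
    have : ∑ m ∈ Finset.Icc k n, Nat.choose (m - k + r - 1) (r - 1)
        = ∑ i ∈ Finset.Icc (r-1) (n - k + r - 1), Nat.choose i (r - 1) := by
      apply Finset.sum_nbij' (fun m => m - k + r - 1) (fun i => i - (r - 1) + k)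
      all_goals intro a ha; simp only [Finset.mem_Icc] at *
      all_goals try omega
    rw [this, Nat.sum_Icc_choose]
    congr 1 <;> omega
end

section
/- Let C₁ be the n×n circulant matrix Circ(𝔽_0, 𝔽_1, …, 𝔽_{n−1}) with (i,j) entry 𝔽_{(j−i) mod n}. Its Euclidean (Frobenius) norm satisfies ‖C₁‖_E² = n²·𝔽_n² − n·∑_{k=0}^{n−1} ((k+1)/F_{k+1})·(2𝔽_k + 1/F_{k+1}). -/
open Finset

lemma key (n : ℕ) :
    (n : ℝ) * (harmFib n) ^ 2 -
      ∑ k ∈ Finset.range n,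
        ((k + 1 : ℝ) / Nat.fib (k + 1)) * (2 * harmFib k + 1 / Nat.fib (k + 1)) =
    ∑ k ∈ Finset.range n, harmFib k ^ 2 := by
  induction n with
  | zero => simp
  | succ m ih =>
    rw [Finset.sum_range_succ, Finset.sum_range_succ, ← ih, harmFib_succ]
    push_cast
    ring

theorem stmt_11 (n : ℕ) (hn : 1 ≤ n) :
    ∑ i : Fin n, ∑ j : Fin n, |Matrix.of (fun i j : Fin n => harmFib ((j - i : Fin n) : ℕ)) i j| ^ 2 =
      (n : ℝ) ^ 2 * (harmFib n) ^ 2 -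
        n * ∑ k ∈ Finset.range n,
          ((k + 1 : ℝ) / Nat.fib (k + 1)) * (2 * harmFib k + 1 / Nat.fib (k + 1)) := by
  have : NeZero n := ⟨by omega⟩
  have hrow : ∀ i : Fin n, ∑ j : Fin n, harmFib ((j - i : Fin n) : ℕ) ^ 2 =
      ∑ k ∈ Finset.range n, harmFib k ^ 2 := by
    intro i
    rw [← Fin.sum_univ_eq_sum_range]
    exact Fintype.sum_bijective (· - i) (Equiv.subRight i).bijective _ _ (fun _ => rfl)
  calc ∑ i : Fin n, ∑ j : Fin n,
        |Matrix.of (fun i j : Fin n => harmFib ((j - i : Fin n) : ℕ)) i j| ^ 2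
      = ∑ i : Fin n, ∑ k ∈ Finset.range n, harmFib k ^ 2 := by
        simp only [Matrix.of_apply, sq_abs]
        exact Fintype.sum_congr _ _ hrow
    _ = (n : ℝ) * ∑ k ∈ Finset.range n, harmFib k ^ 2 := by
        rw [Finset.sum_const, card_univ, Fintype.card_fin, nsmul_eq_mul]
    _ = _ := by rw [← key n]; ring
end

section
/- Let C₂ be the n×n circulant matrix Circ(𝔽_0^{(r)}, 𝔽_1^{(r)}, …, 𝔽_{n−1}^{(r)}) for n, r ≥ 1. Its spectral norm equals 𝔽_{n−1}^{(r+1)}. -/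
open Finset

lemma hFib_nonneg (r n : ℕ) : 0 ≤ hFib r n := by
  induction r generalizing n with
  | zero => unfold hFib; positivity
  | succ r ih => exact Finset.sum_nonneg fun k _ => ih k

lemma hFib_zero (r : ℕ) : hFib r 0 = 0 := by
  cases r <;> simp [hFib]

lemma sum_fin (n r : ℕ) (hn : 1 ≤ n) :
    ∑ k : Fin n, hFib r (k : ℕ) = hFib (r + 1) (n - 1) := by
  rw [Fin.sum_univ_eq_sum_range, Finset.range_eq_Ico,
    Finset.sum_eq_sum_Ico_succ_bot hn, hFib_zero, zero_add]
  have : n = (n - 1) + 1 := (Nat.succ_pred_eq_of_pos hn).symm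
  rw [this, Finset.Ico_add_one_right_eq_Icc]
  rfl

open scoped Matrix.Norms.L2Operator

theorem stmt_13 (n r : ℕ) (hn : 1 ≤ n) (hr : 1 ≤ r) :
    ‖(Matrix.of (fun i j : Fin n => hFib r ((j - i : Fin n) : ℕ)) : Matrix (Fin n) (Fin n) ℝ)‖ =
      hFib (r + 1) (n - 1) := by
  classical
  set A : Matrix (Fin n) (Fin n) ℝ :=
    Matrix.of (fun i j : Fin n => hFib r ((j - i : Fin n) : ℕ)) with hA
  set S : ℝ := hFib (r + 1) (n - 1) with hS
  have hSnn : 0 ≤ S := hFib_nonneg _ _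
  have hAnn : ∀ i j, 0 ≤ A i j := fun i j => hFib_nonneg _ _
  have : NeZero n := ⟨by omega⟩
  have hrow : ∀ i : Fin n, ∑ j, A i j = S := by
    intro i
    rw [hS, ← sum_fin n r hn]
    exact Fintype.sum_equiv (Equiv.subRight i) _ _ (fun j => rfl)
  have hcol : ∀ j : Fin n, ∑ i, A i j = S := by
    intro j
    rw [hS, ← sum_fin n r hn]
    exact Fintype.sum_equiv (Equiv.subLeft j) _ _ (fun i => rfl)
  rw [Matrix.l2_opNorm_def]
  set T := (Matrix.toEuclideanLin.trans LinearMap.toContinuousLinearMap) A with hT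
  have hTapp : ∀ (x : EuclideanSpace ℝ (Fin n)) (i : Fin n),
      T x i = ∑ j, A i j * x j := by
    intro x i; rfl
  apply le_antisymm
  · apply ContinuousLinearMap.opNorm_le_bound _ hSnn
    intro x
    have key : ∑ i, ‖T x i‖ ^ 2 ≤ S ^ 2 * ∑ j, ‖x j‖ ^ 2 := by
      have step1 : ∀ i, ‖T x i‖ ^ 2 ≤ S * ∑ j, A i j * x j ^ 2 := by
        intro i
        rw [hTapp, Real.norm_eq_abs, sq_abs]
        calc (∑ j, A i j * x j) ^ 2
            = (∑ j, Real.sqrt (A i j) * (Real.sqrt (A i j) * x j)) ^ 2 := by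
              congr 1; refine Finset.sum_congr rfl fun j _ => ?_
              rw [← mul_assoc, Real.mul_self_sqrt (hAnn i j)]
          _ ≤ (∑ j, Real.sqrt (A i j) ^ 2) * ∑ j, (Real.sqrt (A i j) * x j) ^ 2 :=
              Finset.sum_mul_sq_le_sq_mul_sq _ _ _
          _ = S * ∑ j, A i j * x j ^ 2 := by
              congr 1
              · rw [← hrow i]; refine Finset.sum_congr rfl fun j _ => Real.sq_sqrt (hAnn i j)
              · refine Finset.sum_congr rfl fun j _ => ?_
                rw [mul_pow, Real.sq_sqrt (hAnn i j)]
      calc ∑ i, ‖T x i‖ ^ 2 ≤ ∑ i, S * ∑ j, A i j * x j ^ 2 :=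
            Finset.sum_le_sum fun i _ => step1 i
        _ = S * ∑ j, (∑ i, A i j) * x j ^ 2 := by
            rw [← Finset.mul_sum, Finset.sum_comm]
            congr 1; refine Finset.sum_congr rfl fun j _ => ?_
            rw [Finset.sum_mul]
        _ = S ^ 2 * ∑ j, ‖x j‖ ^ 2 := by
            simp_rw [hcol, Real.norm_eq_abs, sq_abs]
            rw [← Finset.mul_sum, ← mul_assoc, sq]
    rw [EuclideanSpace.norm_eq, EuclideanSpace.norm_eq]
    calc Real.sqrt (∑ i, ‖T x i‖ ^ 2) ≤ Real.sqrt (S ^ 2 * ∑ j, ‖x j‖ ^ 2) :=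
          Real.sqrt_le_sqrt key
      _ = S * Real.sqrt (∑ j, ‖x j‖ ^ 2) := by
          rw [Real.sqrt_mul (sq_nonneg S), Real.sqrt_sq hSnn]
  · set x : EuclideanSpace ℝ (Fin n) := (WithLp.equiv 2 _).symm (fun _ => (1 : ℝ)) with hx
    have hxi : ∀ i : Fin n, x i = 1 := fun i => rfl
    have hxnorm : ‖x‖ = Real.sqrt n := by
      rw [EuclideanSpace.norm_eq]
      simp [hxi]
    have hTx : ∀ i, T x i = S := by
      intro i
      rw [hTapp]
      simp only [hxi, mul_one]
      exact hrow i
    have hTxnorm : ‖T x‖ = S * Real.sqrt n := by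
      rw [EuclideanSpace.norm_eq]
      simp only [hTx, Real.norm_eq_abs, abs_of_nonneg hSnn]
      rw [Finset.sum_const, Finset.card_univ, Fintype.card_fin, nsmul_eq_mul,
        Real.sqrt_mul (by positivity), Real.sqrt_sq hSnn, mul_comm]
    have hle := T.le_opNorm x
    rw [hTxnorm, hxnorm] at hle
    have hpos : (0 : ℝ) < Real.sqrt n := by
      apply Real.sqrt_pos.2; exact_mod_cast hn
    exact le_of_mul_le_mul_right (by linarith [hle]) hpos
end

section
/- For the n×n circulant matrix C₂ = Circ(𝔽_0^{(r)}, …, 𝔽_{n−1}^{(r)}) with n, r ≥ 1, the Frobenius norm satisfies 𝔽_{n−1}^{(r+1)} ≤ ‖C₂‖_E ≤ √n · 𝔽_{n−1}^{(r+1)}. -/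
open Finset

lemma hFib_succ_zero (r : ℕ) : hFib (r + 1) 0 = 0 := by
  simp [hFib]

theorem stmt_15 (n r : ℕ) (hn : 1 ≤ n) (hr : 1 ≤ r) :
    hFib (r + 1) (n - 1) ≤
        Real.sqrt (∑ i : Fin n, ∑ j : Fin n,
          |Matrix.of (fun i j : Fin n => hFib r ((j - i : Fin n) : ℕ)) i j| ^ 2) ∧
      Real.sqrt (∑ i : Fin n, ∑ j : Fin n,
          |Matrix.of (fun i j : Fin n => hFib r ((j - i : Fin n) : ℕ)) i j| ^ 2) ≤
        Real.sqrt n * hFib (r + 1) (n - 1) := by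
  obtain ⟨r, rfl⟩ : ∃ r', r = r' + 1 := ⟨r - 1, by omega⟩
  haveI : NeZero n := ⟨by omega⟩
  set S : ℝ := ∑ k ∈ Finset.range n, hFib (r + 1) k ^ 2 with hSdef
  set T : ℝ := ∑ k ∈ Finset.range n, hFib (r + 1) k with hTdef
  have hrow : ∀ i : Fin n,
      (∑ j : Fin n, |Matrix.of (fun i j : Fin n =>
        hFib (r + 1) ((j - i : Fin n) : ℕ)) i j| ^ 2) = S := by
    intro i
    rw [hSdef, ← Fin.sum_univ_eq_sum_range (fun k => hFib (r + 1) k ^ 2)]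
    refine Fintype.sum_equiv (Equiv.subRight i) _ _ (fun j => ?_)
    simp [sq_abs, Equiv.subRight]
  have htot : (∑ i : Fin n, ∑ j : Fin n, |Matrix.of (fun i j : Fin n =>
      hFib (r + 1) ((j - i : Fin n) : ℕ)) i j| ^ 2) = n * S := by
    rw [Finset.sum_congr rfl fun i _ => hrow i, Finset.sum_const, Finset.card_univ,
      Fintype.card_fin, nsmul_eq_mul]
  have hIcc : Finset.Icc 1 (n - 1) = Finset.Ico 1 n := by
    rw [← Finset.Ico_add_one_right_eq_Icc]
    congr 1
    omega
  have hT_eq : hFib (r + 1 + 1) (n - 1) = T := by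
    show (∑ k ∈ Finset.Icc 1 (n - 1), hFib (r + 1) k) = T
    rw [hIcc, hTdef, Finset.range_eq_Ico,
      Finset.sum_eq_sum_Ico_succ_bot (show (0 : ℕ) < n by omega) (fun k => hFib (r + 1) k),
      hFib_succ_zero, zero_add]
  have hT_nonneg : 0 ≤ T := Finset.sum_nonneg fun k _ => hFib_nonneg _ _
  have hS_nonneg : 0 ≤ S := Finset.sum_nonneg fun k _ => by positivity
  have key1 : T ^ 2 ≤ n * S := by
    have := sq_sum_le_card_mul_sum_sq (s := Finset.range n)
      (f := fun k => hFib (r + 1) k)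
    simpa using this
  have key2 : S ≤ T ^ 2 :=
    Finset.sum_sq_le_sq_sum_of_nonneg fun k _ => hFib_nonneg _ _
  rw [htot, hT_eq]
  constructor
  · exact (Real.le_sqrt hT_nonneg (by positivity)).mpr key1
  · rw [Real.sqrt_mul (by positivity)]
    gcongr
    calc Real.sqrt S ≤ Real.sqrt (T ^ 2) := Real.sqrt_le_sqrt key2
      _ = T := Real.sqrt_sq hT_nonneg
end
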